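/- Let ψ ∈ ℂ⁸ be a unit vector describing a pure state of three qubits X, Y, Z, with reduced density matrices ρ_XY, ρ_XZ, and ρ_X defined by partial traces as (ρ_XY)_{(i,j),(i',j')} = Σ_k ψ_{ijk} ψ*_{i'j'k}, (ρ_XZ)_{(i,k),(i',k')} = Σ_j ψ_{ijk} ψ*_{i'jk'}, (ρ_X)_{i,i'} = Σ_{j,k} ψ_{ijk} ψ*_{i'jk}. If H(ρ_XY) = 1 then H(ρ_XZ) = 0, and if H(ρ_XZ) = 1 then H(ρ_XY) = 0, where H is the harmony of a 2-qubit density matrix. -/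
import Mathlib


open Matrix Kronecker Complex ComplexOrder

/-- The Pauli matrix `σy`. -/
noncomputable def pauliY : Matrix (Fin 2) (Fin 2) ℂ := !![0, -Complex.I; Complex.I, 0]

/-- The spin-flip matrix `σy ⊗ σy` (Kronecker product). -/
noncomputable def sigYY : Matrix (Fin 2 × Fin 2) (Fin 2 × Fin 2) ℂ := pauliY ⊗ₖ pauliY

/-- The spin-flipped matrix `ρ̃ = (σy⊗σy) ρ* (σy⊗σy)`, with `ρ*` the entrywise
complex conjugate of `ρ`. -/
noncomputable def spinFlip (ρ : Matrix (Fin 2 × Fin 2) (Fin 2 × Fin 2) ℂ) :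
    Matrix (Fin 2 × Fin 2) (Fin 2 × Fin 2) ℂ :=
  sigYY * ρ.map (starRingEnd ℂ) * sigYY

/-- The harmony `H(ρ) = max{0, 2 tr[(ρρ̃)²] − (tr(ρρ̃))² − 8 det ρ}` (for a density
matrix `ρ` all the quantities involved are real, so we take real parts). -/
noncomputable def harmony (ρ : Matrix (Fin 2 × Fin 2) (Fin 2 × Fin 2) ℂ) : ℝ :=
  max 0 (2 * ((ρ * spinFlip ρ * (ρ * spinFlip ρ)).trace).re
    - ((ρ * spinFlip ρ).trace.re) ^ 2 - 8 * ρ.det.re)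

noncomputable def rhoOf (φ : Fin 2 × Fin 2 × Fin 2 → ℂ) :
    Matrix (Fin 2 × Fin 2) (Fin 2 × Fin 2) ℂ :=
  Matrix.of fun p q => ∑ k, φ (p.1, p.2, k) * star (φ (q.1, q.2, k))

noncomputable def Ca (φ : Fin 2 × Fin 2 × Fin 2 → ℂ) : Matrix (Fin 2 × Fin 2) (Fin 2) ℂ :=
  Matrix.of fun p k => φ (p.1, p.2, k)

noncomputable def Cb (φ : Fin 2 × Fin 2 × Fin 2 → ℂ) : Matrix (Fin 2 × Fin 2) (Fin 2) ℂ :=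
  sigYY * (Ca φ).map (starRingEnd ℂ)

noncomputable def tE (φ : Fin 2 × Fin 2 × Fin 2 → ℂ) (k l : Fin 2) : ℂ :=
  - φ (0,0,k) * φ (1,1,l) + φ (0,1,k) * φ (1,0,l) + φ (1,0,k) * φ (0,1,l) - φ (1,1,k) * φ (0,0,l)

noncomputable def Kmat (φ : Fin 2 × Fin 2 × Fin 2 → ℂ) : Matrix (Fin 2) (Fin 2) ℂ :=
  Matrix.of fun k l => star (tE φ k l)

lemma rho_fact (φ : Fin 2 × Fin 2 × Fin 2 → ℂ) : rhoOf φ = Ca φ * (Ca φ)ᴴ := by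
  ext p q
  simp [rhoOf, Ca, Matrix.mul_apply, Matrix.conjTranspose_apply]

lemma sigYY_herm : sigYYᴴ = sigYY := by
  ext ⟨i, j⟩ ⟨k, l⟩
  fin_cases i <;> fin_cases j <;> fin_cases k <;> fin_cases l <;>
    simp [sigYY, pauliY, Matrix.conjTranspose_apply, Matrix.kroneckerMap_apply]

lemma conjmap (C : Matrix (Fin 2 × Fin 2) (Fin 2) ℂ) :
    (C.map (starRingEnd ℂ))ᴴ = Cᵀ := by
  ext k p
  simp [Matrix.conjTranspose_apply, Matrix.map_apply, Matrix.transpose_apply]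

lemma conjmapH (C : Matrix (Fin 2 × Fin 2) (Fin 2) ℂ) :
    (Cᴴ).map (starRingEnd ℂ) = Cᵀ := by
  ext k p
  simp [Matrix.conjTranspose_apply, Matrix.map_apply, Matrix.transpose_apply]

lemma spin_fact (φ : Fin 2 × Fin 2 × Fin 2 → ℂ) :
    spinFlip (rhoOf φ) = Cb φ * (Cb φ)ᴴ := by
  rw [rho_fact, spinFlip, Matrix.map_mul, conjmapH, Cb, Matrix.conjTranspose_mul,
    conjmap, sigYY_herm]
  simp only [Matrix.mul_assoc]

set_option maxRecDepth 10000 in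
lemma K_fact (φ : Fin 2 × Fin 2 × Fin 2 → ℂ) :
    (Ca φ)ᴴ * Cb φ = Kmat φ := by
  ext k l
  fin_cases k <;> fin_cases l <;>
    · simp only [Ca, Cb, Kmat, tE, sigYY, pauliY, Matrix.mul_apply, Matrix.conjTranspose_apply,
        Matrix.map_apply, Matrix.kroneckerMap_apply, Matrix.of_apply, Fintype.sum_prod_type,
        Fin.sum_univ_two, starRingEnd_apply, star_mul', star_star, star_sub, star_add, star_neg,
        Matrix.cons_val', Matrix.cons_val_zero, Matrix.cons_val_one, Matrix.head_cons,
        Matrix.head_fin_const, Matrix.empty_val', Matrix.cons_val_fin_one]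
      ring_nf
      simp only [Complex.I_sq]
      ring

lemma tr_red1 (A B : Matrix (Fin 2 × Fin 2) (Fin 2) ℂ) :
    (A * Aᴴ * (B * Bᴴ)).trace = ((Aᴴ * B) * (Aᴴ * B)ᴴ).trace := by
  rw [Matrix.conjTranspose_mul, Matrix.conjTranspose_conjTranspose]
  rw [Matrix.mul_assoc A, Matrix.trace_mul_comm A]
  simp only [Matrix.mul_assoc]

lemma tr_red2 (A B : Matrix (Fin 2 × Fin 2) (Fin 2) ℂ) :
    (A * Aᴴ * (B * Bᴴ) * (A * Aᴴ * (B * Bᴴ))).trace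
      = ((Aᴴ * B) * (Aᴴ * B)ᴴ * ((Aᴴ * B) * (Aᴴ * B)ᴴ)).trace := by
  rw [Matrix.conjTranspose_mul, Matrix.conjTranspose_conjTranspose]
  simp only [Matrix.mul_assoc]
  rw [Matrix.trace_mul_comm A]
  simp only [Matrix.mul_assoc]

noncomputable def nS (φ : Fin 2 × Fin 2 × Fin 2 → ℂ) : ℝ :=
  normSq (tE φ 0 0) + 2 * normSq (tE φ 0 1) + normSq (tE φ 1 1)

noncomputable def bC (φ : Fin 2 × Fin 2 × Fin 2 → ℂ) : ℂ :=
  star (tE φ 0 0) * tE φ 0 1 + star (tE φ 0 1) * tE φ 1 1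

noncomputable def dC (φ : Fin 2 × Fin 2 × Fin 2 → ℂ) : ℂ :=
  tE φ 0 0 * tE φ 1 1 - tE φ 0 1 * tE φ 0 1

lemma tE_symm (φ : Fin 2 × Fin 2 × Fin 2 → ℂ) : tE φ 1 0 = tE φ 0 1 := by
  simp only [tE]; ring

lemma trace_K (φ : Fin 2 × Fin 2 × Fin 2 → ℂ) :
    ((Kmat φ) * (Kmat φ)ᴴ).trace.re = nS φ := by
  simp only [Kmat, nS, Matrix.trace, Matrix.diag, Matrix.mul_apply,
    Matrix.conjTranspose_apply, Matrix.of_apply, Fin.sum_univ_two, tE_symm, star_star,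
    Complex.star_def, Complex.normSq_apply, Complex.add_re, Complex.add_im, Complex.mul_re,
    Complex.mul_im, Complex.conj_re, Complex.conj_im]
  ring

lemma trace_K2 (φ : Fin 2 × Fin 2 × Fin 2 → ℂ) :
    ((Kmat φ) * (Kmat φ)ᴴ * ((Kmat φ) * (Kmat φ)ᴴ)).trace.re
      = (normSq (tE φ 0 0) + normSq (tE φ 0 1)) ^ 2
        + (normSq (tE φ 0 1) + normSq (tE φ 1 1)) ^ 2 + 2 * normSq (bC φ) := by
  simp only [Kmat, bC, Matrix.trace, Matrix.diag, Matrix.mul_apply,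
    Matrix.conjTranspose_apply, Matrix.of_apply, Fin.sum_univ_two, tE_symm, star_star,
    Complex.star_def, Complex.normSq_apply, Complex.add_re, Complex.add_im, Complex.mul_re,
    Complex.mul_im, Complex.conj_re, Complex.conj_im]
  ring

lemma det_rho (φ : Fin 2 × Fin 2 × Fin 2 → ℂ) : (rhoOf φ).det = 0 := by
  have hD : rhoOf φ
      = (Matrix.of fun p q : Fin 2 × Fin 2 => if q.1 = 0 then φ (p.1, p.2, q.2) else 0)
        * (Matrix.of fun p q : Fin 2 × Fin 2 => if q.1 = 0 then φ (p.1, p.2, q.2) else 0)ᴴ := by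
    ext p q
    simp [rhoOf, Matrix.mul_apply, Matrix.conjTranspose_apply, Fintype.sum_prod_type,
      Fin.sum_univ_two]
  rw [hD, Matrix.det_mul]
  have h0 : (Matrix.of fun p q : Fin 2 × Fin 2 =>
      if q.1 = 0 then φ (p.1, p.2, q.2) else 0).det = 0 := by
    apply Matrix.det_eq_zero_of_column_eq_zero ((1 : Fin 2), (0 : Fin 2))
    intro i
    simp
  rw [h0, zero_mul]

lemma nsq_id (a b d : ℂ) :
    normSq (star a * b + star b * d) + normSq (a * d - b * b)
      = (normSq a + normSq b) * (normSq b + normSq d) := by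
  simp only [Complex.normSq_apply, Complex.add_re, Complex.add_im, Complex.mul_re,
    Complex.mul_im, Complex.sub_re, Complex.sub_im, Complex.star_def, Complex.conj_re,
    Complex.conj_im]
  ring

lemma harmony_rho (φ : Fin 2 × Fin 2 × Fin 2 → ℂ) :
    harmony (rhoOf φ) = max 0 ((nS φ) ^ 2 - 4 * normSq (dC φ)) := by
  have h1 : (rhoOf φ * spinFlip (rhoOf φ)).trace = (Kmat φ * (Kmat φ)ᴴ).trace := by
    rw [spin_fact, rho_fact, tr_red1, K_fact]
  have h2 : (rhoOf φ * spinFlip (rhoOf φ) * (rhoOf φ * spinFlip (rhoOf φ))).trace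
      = (Kmat φ * (Kmat φ)ᴴ * (Kmat φ * (Kmat φ)ᴴ)).trace := by
    rw [spin_fact, rho_fact, tr_red2, K_fact]
  unfold harmony
  rw [h1, h2, det_rho, trace_K, trace_K2]
  norm_num
  congr 1
  have := nsq_id (tE φ 0 0) (tE φ 0 1) (tE φ 1 1)
  simp only [nS, bC, dC]
  nlinarith [this]

lemma nS_nonneg (φ : Fin 2 × Fin 2 × Fin 2 → ℂ) : 0 ≤ nS φ := by
  have h1 := Complex.normSq_nonneg (tE φ 0 0)
  have h2 := Complex.normSq_nonneg (tE φ 0 1)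
  have h3 := Complex.normSq_nonneg (tE φ 1 1)
  unfold nS; linarith

lemma mono (ψ : Fin 2 × Fin 2 × Fin 2 → ℂ)
    (hψ : ∑ p, Complex.normSq (ψ p) = 1) :
    nS ψ + nS (fun x => ψ (x.1, x.2.2, x.2.1)) ≤ 1 := by
  have hsum : normSq (ψ (0,0,0)) + normSq (ψ (0,0,1)) + normSq (ψ (0,1,0))
      + normSq (ψ (0,1,1)) + normSq (ψ (1,0,0)) + normSq (ψ (1,0,1))
      + normSq (ψ (1,1,0)) + normSq (ψ (1,1,1)) = 1 := by
    rw [← hψ]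
    simp [Fintype.sum_prod_type, Fin.sum_univ_two]
    ring
  set P : ℝ := normSq (ψ (0,0,0)) + normSq (ψ (0,0,1)) + normSq (ψ (0,1,0))
      + normSq (ψ (0,1,1)) with hP
  set Q : ℝ := normSq (ψ (1,0,0)) + normSq (ψ (1,0,1)) + normSq (ψ (1,1,0))
      + normSq (ψ (1,1,1)) with hQ
  set c01 : ℂ := ψ (0,0,0) * star (ψ (1,0,0)) + ψ (0,0,1) * star (ψ (1,0,1))
      + ψ (0,1,0) * star (ψ (1,1,0)) + ψ (0,1,1) * star (ψ (1,1,1)) with hc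
  have hid : nS ψ + nS (fun x => ψ (x.1, x.2.2, x.2.1)) = 4 * (P * Q - normSq c01) := by
    simp only [nS, tE, hP, hQ, hc, Complex.normSq_apply, Complex.add_re, Complex.add_im,
      Complex.mul_re, Complex.mul_im, Complex.sub_re, Complex.sub_im, Complex.neg_re,
      Complex.neg_im, Complex.star_def, Complex.conj_re, Complex.conj_im]
    ring
  have hPQ : P + Q = 1 := by rw [hP, hQ]; linarith [hsum]
  have hc0 : 0 ≤ normSq c01 := Complex.normSq_nonneg _
  nlinarith [sq_nonneg (P - Q)]

/-- For a pure 3-qubit state `ψ` with 2-qubit reduced density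
matrices `ρ_XY` and `ρ_XZ`: if `H(ρ_XY) = 1` then `H(ρ_XZ) = 0`, and vice versa. -/
theorem harmony_one_forces_zero (ψ : Fin 2 × Fin 2 × Fin 2 → ℂ)
    (hψ : ∑ p, Complex.normSq (ψ p) = 1)
    (ρXY : Matrix (Fin 2 × Fin 2) (Fin 2 × Fin 2) ℂ)
    (hρXY : ρXY = Matrix.of fun p q => ∑ k, ψ (p.1, p.2, k) * star (ψ (q.1, q.2, k)))
    (ρXZ : Matrix (Fin 2 × Fin 2) (Fin 2 × Fin 2) ℂ)
    (hρXZ : ρXZ = Matrix.of fun p q => ∑ j, ψ (p.1, j, p.2) * star (ψ (q.1, j, q.2)))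
    (ρX : Matrix (Fin 2) (Fin 2) ℂ)
    (hρX : ρX = Matrix.of fun i i' => ∑ j, ∑ k, ψ (i, j, k) * star (ψ (i', j, k))) :
    (harmony ρXY = 1 → harmony ρXZ = 0) ∧ (harmony ρXZ = 1 → harmony ρXY = 0) := by
  have eXY : ρXY = rhoOf ψ := hρXY
  have eXZ : ρXZ = rhoOf (fun x => ψ (x.1, x.2.2, x.2.1)) := hρXZ
  set ψ' : Fin 2 × Fin 2 × Fin 2 → ℂ := fun x => ψ (x.1, x.2.2, x.2.1) with hψ'
  rw [eXY, eXZ, harmony_rho, harmony_rho]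
  have hs : 0 ≤ nS ψ := nS_nonneg ψ
  have hs' : 0 ≤ nS ψ' := nS_nonneg ψ'
  have hmono : nS ψ + nS ψ' ≤ 1 := mono ψ hψ
  have hd : 0 ≤ normSq (dC ψ) := Complex.normSq_nonneg _
  have hd' : 0 ≤ normSq (dC ψ') := Complex.normSq_nonneg _
  constructor
  · intro h
    rw [max_eq_iff] at h
    rcases h with ⟨h0, _⟩ | ⟨h1, _⟩
    · norm_num at h0
    · have hS1 : 1 ≤ nS ψ := by nlinarith
      have hS0 : nS ψ' = 0 := by linarith
      apply max_eq_left
      nlinarith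
  · intro h
    rw [max_eq_iff] at h
    rcases h with ⟨h0, _⟩ | ⟨h1, _⟩
    · norm_num at h0
    · have hS1 : 1 ≤ nS ψ' := by nlinarith
      have hS0 : nS ψ = 0 := by linarith
      apply max_eq_left
      nlinarith
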